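/- arXiv:1904.06303 — 6 statements merged into one kernel-verified Lean document; each statement's English description precedes it below -/
import Mathlib

section
/- Let n ≥ 1. Let z, z' ∈ {0,1}^{n−1} be bitstrings and let h_z, h_{z'} ∈ {0,1}. Consider the (n+1)-qubit vector |ψ⟩ = |h_z⟩ ⊗ |z⟩ ⊗ |0⟩ + |h_{z'}⟩ ⊗ |z'⟩ ⊗ |1⟩ (the first qubit is the output register, the remaining n qubits encode the preimages x = (z,0) and x' = (z',1)). For any b = (b_1,…,b_n) ∈ {0,1}^n, let |out⟩ be the single-qubit vector obtained from |ψ⟩ by applying, to each of the last n qubits, the functional (⟨0| + (−1)^{b_i}⟨1|)/√2. Then, whenever |out⟩ ≠ 0, there is a nonzero complex scalar c such that |out⟩ = c · X^{h_z} Z^{b_n + Σ_{i=1}^{n−1}(z_i + z'_i)·b_i} H^{h_z + h_{z'}} |0⟩, where all exponents are taken mod 2. (This is the correctness statement of the Malicious 4-states QFactory protocol: the output is the BB84 state H^{B_1}X^{B_2}|0⟩ with basis bit B_1 = h_z ⊕ h_{z'}.) -/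
/- STATEMENT 0: Correctness of the Malicious 4-states QFactory protocol.
   Qubits are indexed by `Bool` (|0⟩ ↔ false, |1⟩ ↔ true).
   The n = m+1 case: bitstrings z, z' have length n-1 = m; there are n+1 = m+2 qubits. -/

namespace QFactory4

noncomputable def Xg : Matrix Bool Bool ℂ := Matrix.of fun i j => if i = j then 0 else 1

noncomputable def Zg : Matrix Bool Bool ℂ :=
  Matrix.of fun i j => if i = j then (if i then -1 else 1) else 0

noncomputable def Hg : Matrix Bool Bool ℂ :=
  ((Real.sqrt 2 : ℂ))⁻¹ • Matrix.of fun i j => if i && j then (-1 : ℂ) else 1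

def ket0 : Bool → ℂ := fun i => if i then 0 else 1

private lemma sum_delta {k : ℕ} (f : (Fin k → Bool) → ℂ) (p : Prop) [Decidable p]
    (u : Fin k → Bool) :
    ∑ v : Fin k → Bool, f v * (if p ∧ v = u then 1 else 0) = if p then f u else 0 := by
  by_cases hp : p <;> simp [hp, mul_ite, Finset.sum_ite_eq']

private lemma neg_one_pow_mod (n : ℕ) : (-1:ℂ)^(n%2) = (-1)^n := by
  conv_rhs => rw [← Nat.div_add_mod n 2]
  rw [pow_add, pow_mul]; simp

private lemma prod_snoc (m : ℕ) (z : Fin m → Bool) (b : Fin (m+1) → Bool) (l : Bool) :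
    (∏ i : Fin (m+1), ((if b i && (Fin.snoc z l : Fin (m+1) → Bool) i then (-1:ℂ) else 1) / (Real.sqrt 2 : ℂ)))
    = ((∏ i : Fin m, (if b i.castSucc && z i then (-1:ℂ) else 1)) * (if b (Fin.last m) && l then (-1:ℂ) else 1)) / ((Real.sqrt 2 : ℂ))^(m+1) := by
  rw [Finset.prod_div_distrib, Finset.prod_const, Finset.card_univ, Fintype.card_fin]
  rw [Fin.prod_univ_castSucc]
  simp [Fin.snoc_castSucc, Fin.snoc_last]

-- eval lemmas (for the reduced matrix forms)
private lemma evX : Xg.mulVec ket0 = fun a => if a then 1 else 0 := by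
  funext a; cases a <;> simp [Xg, ket0, Matrix.mulVec, dotProduct, Fintype.sum_bool]
private lemma evH : Hg.mulVec ket0 = fun _ => ((Real.sqrt 2:ℝ):ℂ)⁻¹ := by
  funext a; cases a <;> simp [Hg, ket0, Matrix.mulVec, dotProduct, Fintype.sum_bool]
private lemma evXH : (Xg * Hg).mulVec ket0 = fun _ => ((Real.sqrt 2:ℝ):ℂ)⁻¹ := by
  funext a; cases a <;> simp [Xg, Hg, ket0, Matrix.mulVec, dotProduct, Matrix.mul_apply, Fintype.sum_bool]
private lemma evZH : (Zg * Hg).mulVec ket0 = fun a => ((Real.sqrt 2:ℝ):ℂ)⁻¹ * (if a then -1 else 1) := by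
  funext a; cases a <;> simp [Zg, Hg, ket0, Matrix.mulVec, dotProduct, Matrix.mul_apply, Fintype.sum_bool]
private lemma evXZH : (Xg * Zg * Hg).mulVec ket0 = fun a => ((Real.sqrt 2:ℝ):ℂ)⁻¹ * (if a then 1 else -1) := by
  funext a; cases a <;> simp [Xg, Zg, Hg, ket0, Matrix.mulVec, dotProduct, Matrix.mul_apply, Fintype.sum_bool]

private lemma key (m : ℕ) (z z' : Fin m → Bool) (hz hz' : Bool) (b : Fin (m + 1) → Bool)
    (h : (fun a : Bool => ∑ v : Fin (m + 1) → Bool,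
        (∏ i : Fin (m + 1), ((if b i && v i then (-1 : ℂ) else 1) / (Real.sqrt 2 : ℂ))) *
          ((if (Fin.cons a v : Fin (m + 2) → Bool) = Fin.cons hz (Fin.snoc z false) then (1:ℂ) else 0) +
           (if (Fin.cons a v : Fin (m + 2) → Bool) = Fin.cons hz' (Fin.snoc z' true) then 1 else 0))) ≠ 0) :
    ∃ c : ℂ, c ≠ 0 ∧ (fun a : Bool => ∑ v : Fin (m + 1) → Bool,
        (∏ i : Fin (m + 1), ((if b i && v i then (-1 : ℂ) else 1) / (Real.sqrt 2 : ℂ))) *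
          ((if (Fin.cons a v : Fin (m + 2) → Bool) = Fin.cons hz (Fin.snoc z false) then (1:ℂ) else 0) +
           (if (Fin.cons a v : Fin (m + 2) → Bool) = Fin.cons hz' (Fin.snoc z' true) then 1 else 0))) =
      c • (Xg ^ hz.toNat * Zg ^ (((b (Fin.last m)).toNat +
        ∑ i : Fin m, ((z i).toNat + (z' i).toNat) * (b i.castSucc).toNat) % 2) *
        Hg ^ ((hz.toNat + hz'.toNat) % 2)).mulVec ket0 := by
  set α := ∏ i : Fin m, (if b i.castSucc && z i then (-1:ℂ) else 1) with hαdef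
  set β := ∏ i : Fin m, (if b i.castSucc && z' i then (-1:ℂ) else 1) with hβdef
  set γ := if b (Fin.last m) then (-1:ℂ) else (1:ℂ) with hγdef
  set N := (b (Fin.last m)).toNat +
    ∑ i : Fin m, ((z i).toNat + (z' i).toNat) * (b i.castSucc).toNat with hNdef
  have hc2 : ((Real.sqrt 2:ℝ):ℂ) ≠ 0 := by
    simp [Complex.ofReal_ne_zero]
  set r := ((Real.sqrt 2:ℝ):ℂ)^(m+1) with hrdef
  have hrne : r ≠ 0 := pow_ne_zero _ hc2
  -- parity identity
  have hprod : α * β * γ = (-1:ℂ)^(N % 2) := by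
    rw [neg_one_pow_mod, hNdef, pow_add, hαdef, hβdef, hγdef, ← Finset.prod_mul_distrib]
    have step : ∀ i : Fin m, (if b i.castSucc && z i then (-1:ℂ) else 1) * (if b i.castSucc && z' i then (-1:ℂ) else 1)
        = (-1:ℂ) ^ (((z i).toNat + (z' i).toNat) * (b i.castSucc).toNat) := by
      intro i; cases b i.castSucc <;> cases z i <;> cases z' i <;> norm_num
    rw [Finset.prod_congr rfl (fun i _ => step i), Finset.prod_pow_eq_pow_sum]
    cases b (Fin.last m) <;> norm_num [mul_comm]
  have hα2 : α * α = 1 := by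
    rw [hαdef, ← Finset.prod_mul_distrib]
    apply Finset.prod_eq_one
    intro i _; cases (b i.castSucc && z i) <;> norm_num
  have hαne : α ≠ 0 := by
    intro h0; rw [h0, mul_zero] at hα2; exact one_ne_zero hα2.symm
  have hβγ : β * γ = α * (-1:ℂ)^(N % 2) := by
    calc β * γ = (α * α) * (β * γ) := by rw [hα2, one_mul]
    _ = α * (α * β * γ) := by ring
    _ = α * (-1:ℂ)^(N % 2) := by rw [hprod]
  -- closed form of out
  have hout : (fun a : Bool => ∑ v : Fin (m + 1) → Bool,
        (∏ i : Fin (m + 1), ((if b i && v i then (-1 : ℂ) else 1) / (Real.sqrt 2 : ℂ))) *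
          ((if (Fin.cons a v : Fin (m + 2) → Bool) = Fin.cons hz (Fin.snoc z false) then (1:ℂ) else 0) +
           (if (Fin.cons a v : Fin (m + 2) → Bool) = Fin.cons hz' (Fin.snoc z' true) then 1 else 0))) =
      (fun a : Bool => (if a = hz then (1:ℂ) else 0) * (α / r) +
        (if a = hz' then (1:ℂ) else 0) * ((β * γ) / r)) := by
    funext a
    simp only [mul_add, Finset.sum_add_distrib, Fin.cons_inj, sum_delta]
    rw [prod_snoc, prod_snoc]
    simp only [Bool.and_false, Bool.and_true, if_neg (Bool.false_ne_true), mul_one]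
    rw [← hαdef, ← hβdef, ← hγdef, ← hrdef]
    congr 1 <;> split <;> simp
  rw [hout] at h ⊢
  rcases Nat.mod_two_eq_zero_or_one N with hN2 | hN2 <;> rw [hN2] at hβγ <;>
    rw [hN2] <;> norm_num at hβγ <;> cases hz <;> cases hz' <;>
    simp only [Bool.toNat_true, Bool.toNat_false] <;> norm_num
  -- now the 8 cases
  case _ => -- ff ff, eZ=0
    refine ⟨2 * α / r, by simp [hαne, hrne], ?_⟩
    funext a; cases a <;> simp [ket0, hβγ] <;> ring
  case _ => -- ff tt, eZ=0
    refine ⟨α * ((Real.sqrt 2:ℝ):ℂ) / r, by simp [hαne, hrne, hc2], ?_⟩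
    rw [evH]; funext a; cases a <;> simp [hβγ] <;> field_simp <;> ring
  case _ => -- tt ff, eZ=0
    refine ⟨α * ((Real.sqrt 2:ℝ):ℂ) / r, by simp [hαne, hrne, hc2], ?_⟩
    rw [evXH]; funext a; cases a <;> simp [hβγ] <;> field_simp <;> ring
  case _ => -- tt tt, eZ=0
    refine ⟨2 * α / r, by simp [hαne, hrne], ?_⟩
    rw [evX]; funext a; cases a <;> simp [ket0, hβγ] <;> ring
  case _ => -- ff ff, eZ=1: contradiction
    exfalso; apply h; funext a
    by_cases ha : a = false <;> simp [ha, hβγ] <;> ring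
  case _ => -- ff tt, eZ=1
    refine ⟨α * ((Real.sqrt 2:ℝ):ℂ) / r, by simp [hαne, hrne, hc2], ?_⟩
    rw [evZH]; funext a; cases a <;> simp [hβγ] <;> field_simp <;> ring
  case _ => -- tt ff, eZ=1
    refine ⟨α * ((Real.sqrt 2:ℝ):ℂ) / r, by simp [hαne, hrne, hc2], ?_⟩
    rw [evXZH]; funext a; cases a <;> simp [hβγ] <;> field_simp <;> ring
  case _ => -- tt tt, eZ=1: contradiction
    exfalso; apply h; funext a
    by_cases ha : a = true <;> simp [ha, hβγ] <;> ring

theorem qfactory4_correctness (m : ℕ) (z z' : Fin m → Bool) (hz hz' : Bool)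
    (b : Fin (m + 1) → Bool) :
    -- |ψ⟩ = |h_z⟩ ⊗ |z⟩ ⊗ |0⟩ + |h_{z'}⟩ ⊗ |z'⟩ ⊗ |1⟩, as a vector on m+2 qubits
    let ψ : (Fin (m + 2) → Bool) → ℂ := fun w =>
      (if w = Fin.cons hz (Fin.snoc z false) then 1 else 0) +
      (if w = Fin.cons hz' (Fin.snoc z' true) then 1 else 0)
    -- apply (⟨0| + (−1)^{b_i}⟨1|)/√2 to each of the last m+1 qubits
    let out : Bool → ℂ := fun a =>
      ∑ v : Fin (m + 1) → Bool,
        (∏ i : Fin (m + 1), ((if b i && v i then (-1 : ℂ) else 1) / (Real.sqrt 2 : ℂ))) *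
          ψ (Fin.cons a v)
    -- exponents, taken mod 2
    let eX : ℕ := hz.toNat
    let eZ : ℕ := ((b (Fin.last m)).toNat +
      ∑ i : Fin m, ((z i).toNat + (z' i).toNat) * (b i.castSucc).toNat) % 2
    let eH : ℕ := (hz.toNat + hz'.toNat) % 2
    out ≠ 0 → ∃ c : ℂ, c ≠ 0 ∧ out = c • (Xg ^ eX * Zg ^ eZ * Hg ^ eH).mulVec ket0 := by
  intro ψ out eX eZ eH h
  exact key m z z' hz hz' b h

end QFactory4
end

section
/- Let q ≥ 2 be an even integer and μ a positive integer with 4μ < q. Let n be a positive integer, m ≥ 2, and let K be an m×n matrix over ℤ_q; let K₁ denote the (m−1)×n matrix obtained from K by deleting its first row. Suppose that the map (s, e) ↦ K₁·s + (e mod q), defined for s ∈ (ℤ_q)^n and integer vectors e ∈ ℤ^{m−1} with |e_i| ≤ μ for all i, is injective. Let v ∈ (ℤ_q)^m be the vector (q/2, 0, …, 0) and define g_K(s, e, d) = K·s + (e mod q) + d·v for s ∈ (ℤ_q)^n, e ∈ ℤ^m with |e_i| ≤ μ for all i, and d ∈ {0,1}. Then g_K is injective: g_K(s_1, e_1, d_1)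 = g_K(s_2, e_2, d_2) implies s_1 = s_2, e_1 = e_2 and d_1 = d_2. -/
/- STATEMENT 3: Injectivity of g_K(s,e,d) = K·s + (e mod q) + d·v, where
   v = (q/2, 0, …, 0), errors are integer vectors bounded by μ with 4μ < q, and
   the submatrix K₁ (K with its first row deleted) yields an injective LWE map. -/

theorem gK_injective (q μ n m : ℕ) (hq : 2 ≤ q) (hqeven : Even q) (hμ : 0 < μ)
    (hμq : 4 * μ < q) (hn : 0 < n) (hm : 2 ≤ m)
    (K : Matrix (Fin m) (Fin n) (ZMod q)) :
    let K₁ : Matrix (Fin (m - 1)) (Fin n) (ZMod q) :=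
      Matrix.of fun i j => K ⟨(i : ℕ) + 1, by omega⟩ j
    -- injectivity of the LWE map for K₁ on bounded errors
    (∀ (s s' : Fin n → ZMod q) (e e' : Fin (m - 1) → ℤ),
        (∀ i, |e i| ≤ (μ : ℤ)) → (∀ i, |e' i| ≤ (μ : ℤ)) →
        K₁.mulVec s + (fun i => ((e i : ℤ) : ZMod q)) =
          K₁.mulVec s' + (fun i => ((e' i : ℤ) : ZMod q)) →
        s = s' ∧ e = e') →
    -- conclusion: g_K is injective on bounded errors
    let v : Fin m → ZMod q := fun i => if (i : ℕ) = 0 then ((q / 2 : ℕ) : ZMod q) else 0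
    let g : (Fin n → ZMod q) → (Fin m → ℤ) → Bool → (Fin m → ZMod q) :=
      fun s e d => K.mulVec s + (fun i => ((e i : ℤ) : ZMod q)) + (d.toNat : ZMod q) • v
    ∀ (s1 s2 : Fin n → ZMod q) (e1 e2 : Fin m → ℤ) (d1 d2 : Bool),
      (∀ i, |e1 i| ≤ (μ : ℤ)) → (∀ i, |e2 i| ≤ (μ : ℤ)) →
      g s1 e1 d1 = g s2 e2 d2 → s1 = s2 ∧ e1 = e2 ∧ d1 = d2 := by
  intro K₁ hinj v g s1 s2 e1 e2 d1 d2 hb1 hb2 heq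
  -- restricted equality on rows 1..m-1
  have hrow : ∀ i : Fin m,
      K.mulVec s1 i + ((e1 i : ℤ) : ZMod q) + (d1.toNat : ZMod q) * v i =
      K.mulVec s2 i + ((e2 i : ℤ) : ZMod q) + (d2.toNat : ZMod q) * v i := by
    intro i
    have := congrFun heq i
    simpa [g, Pi.add_apply, Pi.smul_apply, smul_eq_mul] using this
  have hK1 : ∀ (s : Fin n → ZMod q) (i : Fin (m - 1)),
      K₁.mulVec s i = K.mulVec s ⟨(i : ℕ) + 1, by omega⟩ := by
    intro s i
    simp [K₁, Matrix.mulVec, dotProduct]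
  have hsub := hinj s1 s2 (fun i => e1 ⟨(i : ℕ) + 1, by omega⟩)
      (fun i => e2 ⟨(i : ℕ) + 1, by omega⟩) (fun i => hb1 _) (fun i => hb2 _) ?_
  · obtain ⟨hs, he⟩ := hsub
    -- row 0
    have h0 := hrow ⟨0, by omega⟩
    have hv0 : v ⟨0, by omega⟩ = ((q / 2 : ℕ) : ZMod q) := by simp [v]
    rw [hv0, hs] at h0
    obtain ⟨k, hk⟩ := hqeven
    have hq2 : (q / 2 : ℕ) = k := by omega
    rw [hq2] at h0
    have h0' : (((e1 ⟨0, by omega⟩ - e2 ⟨0, by omega⟩) +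
        ((d1.toNat : ℤ) - d2.toNat) * k : ℤ) : ZMod q) = 0 := by
      push_cast
      linear_combination h0
    have hdvd := (ZMod.intCast_zmod_eq_zero_iff_dvd _ q).mp h0'
    have hb1' := hb1 ⟨0, by omega⟩
    have hb2' := hb2 ⟨0, by omega⟩
    rw [abs_le] at hb1' hb2'
    have hkq : (q : ℤ) = k + k := by exact_mod_cast hk
    have hμZ : 4 * (μ : ℤ) < (q : ℤ) := by exact_mod_cast hμq
    have hde : e1 ⟨0, by omega⟩ = e2 ⟨0, by omega⟩ ∧ d1 = d2 := by
      rcases d1 <;> rcases d2 <;> norm_num at hdvd <;>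
        have hz := Int.eq_zero_of_abs_lt_dvd hdvd (by rw [abs_lt]; constructor <;> omega)
      · exact ⟨by omega, rfl⟩
      · exact ⟨by exfalso; omega, by exfalso; omega⟩
      · exact ⟨by exfalso; omega, by exfalso; omega⟩
      · exact ⟨by omega, rfl⟩
    refine ⟨hs, funext fun i => ?_, hde.2⟩
    rcases Nat.eq_zero_or_pos (i : ℕ) with h | h
    · have : i = ⟨0, by omega⟩ := by ext; exact h
      rw [this]; exact hde.1
    · have := congrFun he ⟨(i : ℕ) - 1, by omega⟩
      simpa [show (i : ℕ) - 1 + 1 = (i : ℕ) by omega] using this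
  · funext i
    have := hrow ⟨(i : ℕ) + 1, by omega⟩
    have hvi : v ⟨(i : ℕ) + 1, by omega⟩ = 0 := by simp [v]
    simp only [hvi, mul_zero, add_zero] at this
    simpa [Pi.add_apply, hK1] using this
end

section
/- Let D and R be additive commutative groups and let g : D → R be an injective additive group homomorphism. Fix z_0 ∈ D and define f : D × {0,1} → R by f(z, c) = g(z) + c·g(z_0). Then f is exactly 2-regular: for every z ∈ D, the full preimage of f(z, 0) under f is exactly the two-element set {(z, 0), (z − z_0, 1)}; in particular every element of the range of f has exactly two preimages. Moreover, if h : D → ℤ₂ is any map satisfying h(z_1) + h(z_2) = h(z_2 − z_1) for all z_1, z_2 ∈ D, then for every y in the range of f, writing its two preimages as (z, 0) and (z', 1), one has h(z) + h(z') = h(z_0). (This is the key structural fact underlying the security of Malicious 4-states QFactory: the basis bit B_1 = h(z) ⊕ h(z') equals h(z_0) and hence is independent of the server's messages.) -/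
/- STATEMENT 4: f(z,c) = g(z) + c·g(z₀) built from an injective homomorphism g is
   exactly 2-regular, and for a "homomorphic" predicate h : D → ℤ₂, the XOR of the
   h-values of the two preimages of any image equals h(z₀). -/

theorem two_regular_and_basis_bit
    {D R : Type*} [AddCommGroup D] [AddCommGroup R]
    (g : D →+ R) (hg : Function.Injective g) (z0 : D)
    (f : D × Bool → R)
    (hf : ∀ (z : D) (c : Bool), f (z, c) = g z + if c then g z0 else 0) :
    -- exact 2-regularity: the preimage of f(z,0) is exactly {(z,false), (z−z₀,true)}
    (∀ z : D, f ⁻¹' {f (z, false)} = {(z, false), (z - z0, true)}) ∧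
    -- every element of the range has exactly two preimages
    (∀ y ∈ Set.range f, (f ⁻¹' {y}).ncard = 2) ∧
    -- for homomorphic h, the XOR of the h-values of the two preimages equals h(z₀)
    (∀ h : D → ZMod 2, (∀ z1 z2 : D, h z1 + h z2 = h (z2 - z1)) →
      ∀ y ∈ Set.range f, ∀ z z' : D,
        f (z, false) = y → f (z', true) = y → h z + h z' = h z0) := by
  have key : ∀ z : D, f ⁻¹' {f (z, false)} = {(z, false), (z - z0, true)} := by
    intro z
    ext ⟨w, c⟩
    cases c <;>
      simp only [Set.mem_preimage, Set.mem_singleton_iff, Set.mem_insert_iff,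
        Prod.mk.injEq, hf, Bool.false_eq_true, Bool.true_eq_false, if_false, if_true, add_zero,
        and_true, and_false, or_false, false_or]
    · exact ⟨fun hw => hg hw, fun hw => by rw [hw]⟩
    · constructor
      · intro hw
        refine hg ?_
        rw [map_sub, eq_sub_iff_add_eq, hw]
      · intro hw
        rw [hw, map_sub, sub_add_cancel]
  refine ⟨key, ?_, ?_⟩
  · rintro y ⟨⟨z, c⟩, rfl⟩
    have hy : ∃ z' : D, f (z, c) = f (z', false) := by
      cases c
      · exact ⟨z, rfl⟩
      · refine ⟨z + z0, ?_⟩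
        rw [hf, hf]; simp [map_add, add_comm]
    obtain ⟨z', hz'⟩ := hy
    rw [hz', key]
    rw [Set.ncard_insert_of_notMem (by simp), Set.ncard_singleton]
  · rintro h hh y - z z' hzy hz'y
    have : g z = g z' + g z0 := by
      have := hzy.trans hz'y.symm
      rw [hf, hf] at this
      simpa using this
    have hz : z - z' = z0 := hg (by rw [map_sub, this]; abel)
    rw [add_comm, hh z' z, hz]
end

section
/- Let μ be a probability measure on a measurable space Ω (or a PMF on a type Ω), let a, b, ã, b̃ : Ω → Bool be measurable, and let ε ≥ 0. If P[ã = a and b̃ = b] ≥ 1/4 + ε, then max(P[ã = a], P[b̃ = b], P[ã XOR b̃ = a XOR b]) ≥ 1/2 + (2/3)·ε. (Implication of guessing two predicates: if an adversary guesses a pair of bits with advantage, then it guesses the first bit, the second bit, or their XOR with advantage.) -/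
open MeasureTheory

/- STATEMENT 6: If an adversary guesses a pair of bits with probability ≥ 1/4 + ε,
   then it guesses the first bit, the second bit, or their XOR with probability
   ≥ 1/2 + (2/3)·ε. -/

theorem guess_two_predicates {Ω : Type*} [MeasurableSpace Ω]
    (μ : MeasureTheory.Measure Ω) [MeasureTheory.IsProbabilityMeasure μ]
    (a b ta tb : Ω → Bool)
    (ha : Measurable a) (hb : Measurable b) (hta : Measurable ta) (htb : Measurable tb)
    (ε : ℝ) (hε : 0 ≤ ε)
    (hguess : 1 / 4 + ε ≤ (μ {ω | ta ω = a ω ∧ tb ω = b ω}).toReal) :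
    1 / 2 + (2 / 3) * ε ≤
      max (max (μ {ω | ta ω = a ω}).toReal (μ {ω | tb ω = b ω}).toReal)
        (μ {ω | xor (ta ω) (tb ω) = xor (a ω) (b ω)}).toReal := by
  classical
  set A : Set Ω := {ω | ta ω = a ω} with hA
  set B : Set Ω := {ω | tb ω = b ω} with hB
  have hAm : MeasurableSet A := measurableSet_eq_fun hta ha
  have hBm : MeasurableSet B := measurableSet_eq_fun htb hb
  have hABeq : {ω | ta ω = a ω ∧ tb ω = b ω} = A ∩ B := rfl
  have hCeq : {ω | xor (ta ω) (tb ω) = xor (a ω) (b ω)} = (A ∩ B) ∪ (Aᶜ ∩ Bᶜ) := by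
    ext ω
    simp only [Set.mem_setOf_eq, Set.mem_union, Set.mem_inter_iff, Set.mem_compl_iff,
      hA, hB]
    cases ta ω <;> cases tb ω <;> cases a ω <;> cases b ω <;> simp
  have hfin : ∀ s : Set Ω, μ s ≠ ⊤ := fun s => measure_ne_top μ s
  -- decompositions
  have hAdec : (μ (A ∩ B)).toReal + (μ (A ∩ Bᶜ)).toReal = (μ A).toReal := by
    rw [← ENNReal.toReal_add (hfin _) (hfin _), ← Set.diff_eq, measure_inter_add_diff A hBm]
  have hBdec : (μ (A ∩ B)).toReal + (μ (Aᶜ ∩ B)).toReal = (μ B).toReal := by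
    rw [← ENNReal.toReal_add (hfin _) (hfin _), Set.inter_comm A B, Set.inter_comm Aᶜ B,
      ← Set.diff_eq, measure_inter_add_diff B hAm]
  have hAcdec : (μ (Aᶜ ∩ B)).toReal + (μ (Aᶜ ∩ Bᶜ)).toReal = (μ Aᶜ).toReal := by
    rw [← ENNReal.toReal_add (hfin _) (hfin _), ← Set.diff_eq, measure_inter_add_diff Aᶜ hBm]
  have htotal : (μ A).toReal + (μ Aᶜ).toReal = 1 := by
    rw [← ENNReal.toReal_add (hfin _) (hfin _), measure_add_measure_compl hAm]
    simp
  have hC : (μ ((A ∩ B) ∪ (Aᶜ ∩ Bᶜ))).toReal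
      = (μ (A ∩ B)).toReal + (μ (Aᶜ ∩ Bᶜ)).toReal := by
    rw [measure_union, ENNReal.toReal_add (hfin _) (hfin _)]
    · exact Set.disjoint_of_subset (Set.inter_subset_left) (Set.inter_subset_left)
        (disjoint_compl_right)
    · exact (hAm.compl.inter hBm.compl)
  have hsum : (μ A).toReal + (μ B).toReal + (μ ((A ∩ B) ∪ (Aᶜ ∩ Bᶜ))).toReal
      = 1 + 2 * (μ (A ∩ B)).toReal := by
    rw [hC]; linarith
  rw [hABeq] at hguess
  rw [hCeq]
  have h1 := le_max_left (max (μ A).toReal (μ B).toReal)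
    (μ ((A ∩ B) ∪ (Aᶜ ∩ Bᶜ))).toReal
  have h2 := le_max_right (max (μ A).toReal (μ B).toReal)
    (μ ((A ∩ B) ∪ (Aᶜ ∩ Bᶜ))).toReal
  have h3 := le_max_left (μ A).toReal (μ B).toReal
  have h4 := le_max_right (μ A).toReal (μ B).toReal
  set M := max (max (μ A).toReal (μ B).toReal) (μ ((A ∩ B) ∪ (Aᶜ ∩ Bᶜ))).toReal
  have hMA : (μ A).toReal ≤ M := le_trans h3 h1
  have hMB : (μ B).toReal ≤ M := le_trans h4 h1
  linarith
end

section
/- Let G be a commutative group, let Z and Z₀ be finite nonempty subsets of G, let Y be a commutative group, and extend the group operation ⋆ of Y to Option Y (i.e. Y ∪ {⊥}) by setting (some y₁) ⋆ (some y₂) = some (y₁ ⋆ y₂) and making ⊥ absorbing. Let 𝒦 be a type of keys with a probability distribution κ, let 𝒟 be a probability distribution on Z₀, and let g : 𝒦 → G → Option Y be a family of functions each injective on Z (for every k and every y ∈ Y there is at most one z ∈ Z with g_k(z) = some y). Suppose the family is (η, Z, Z₀, 𝒟)-homomorphic: Pr over k ∼ κ, z₀ ∼ 𝒟, z uniform on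 Z of the event [ z·z₀ ∈ Z and g_k(z) ⋆ g_k(z₀) = g_k(z·z₀) ≠ ⊥ ] is at least η. For each k and z₀ define f_{k,z₀} : Z × {0,1} → Option Y by f_{k,z₀}(z, 0) = g_k(z) and f_{k,z₀}(z, 1) = g_k(z) ⋆ g_k(z₀). Then the family {f_{k,z₀}} is η-2-regular: Pr over k ∼ κ, z₀ ∼ 𝒟, z uniform on Z, c uniform on {0,1} of the event [ f_{k,z₀}(z, c) = some y for some y ∈ Y having exactly two preimages in Z × {0,1} under f_{k,z₀} ] is at least η. -/
open scoped ENNReal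

/- STATEMENT 12: (η, Z, Z₀, 𝒟)-homomorphic + injective families yield an
   η-2-regular family f_{k,z₀}(z,c) = g_k(z) ⋆ (c · g_k(z₀)). -/

theorem homomorphic_to_two_regular
    {G : Type*} [CommGroup G] {Y : Type*} [CommGroup Y]
    (Z Z0 : Finset G) (hZ : Z.Nonempty) (hZ0 : Z0.Nonempty)
    {K : Type*} (κ : PMF K)
    (𝒟 : PMF G) (h𝒟 : ∀ z ∈ 𝒟.support, z ∈ Z0)
    (g : K → G → Option Y)
    -- each g_k is injective on Z
    (hg_inj : ∀ k, ∀ y : Y, ∀ z1 ∈ Z, ∀ z2 ∈ Z,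
      g k z1 = some y → g k z2 = some y → z1 = z2)
    -- the family f_{k,z₀}
    (f : K → G → G × Bool → Option Y)
    (hf : ∀ (k : K) (z0 z : G) (c : Bool),
      f k z0 (z, c) = if c then Option.map₂ (· * ·) (g k z) (g k z0) else g k z)
    (η : ℝ≥0∞)
    -- (η, Z, Z₀, 𝒟)-homomorphic: Pr over k ∼ κ, z₀ ∼ 𝒟, z uniform on Z
    (hhom : η ≤ (κ.bind fun k => 𝒟.bind fun z0 =>
        (PMF.uniformOfFinset Z hZ).map fun z => (k, z0, z)).toOuterMeasure
      {x : K × G × G | x.2.2 * x.2.1 ∈ Z ∧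
        Option.map₂ (· * ·) (g x.1 x.2.2) (g x.1 x.2.1) = g x.1 (x.2.2 * x.2.1) ∧
        g x.1 (x.2.2 * x.2.1) ≠ none}) :
    -- η-2-regularity: Pr over k ∼ κ, z₀ ∼ 𝒟, z uniform on Z, c uniform on Bool
    η ≤ (κ.bind fun k => 𝒟.bind fun z0 =>
        (PMF.uniformOfFinset Z hZ).bind fun z =>
          (PMF.uniformOfFintype Bool).map fun c => (k, z0, z, c)).toOuterMeasure
      {x : K × G × G × Bool | ∃ y : Y,
        f x.1 x.2.1 (x.2.2.1, x.2.2.2) = some y ∧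
        {zc : G × Bool | zc.1 ∈ Z ∧ f x.1 x.2.1 zc = some y}.ncard = 2} := by
  classical
  refine le_trans hhom ?_
  rw [PMF.toOuterMeasure_bind_apply, PMF.toOuterMeasure_bind_apply]
  refine ENNReal.tsum_le_tsum fun k => mul_le_mul_right ?_ _
  rw [PMF.toOuterMeasure_bind_apply, PMF.toOuterMeasure_bind_apply]
  refine ENNReal.tsum_le_tsum fun z0 => mul_le_mul_right ?_ _
  -- core inequality for fixed k, z0
  set u := PMF.uniformOfFinset Z hZ with hu
  set P : G → Prop := fun z => z * z0 ∈ Z ∧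
      Option.map₂ (· * ·) (g k z) (g k z0) = g k (z * z0) ∧
      g k (z * z0) ≠ none with hP
  set Q : G → Bool → Prop := fun z c => ∃ y : Y,
      f k z0 (z, c) = some y ∧
      {zc : G × Bool | zc.1 ∈ Z ∧ f k z0 zc = some y}.ncard = 2 with hQ
  -- key combinatorial fact
  have key : ∀ z, z ∈ Z → P z → Q z true ∧ (Q (z * z0) false ∧ z * z0 ∈ Z) := by
    intro z hzZ hPz
    obtain ⟨hzz0, hmap, hne⟩ := hPz
    obtain ⟨y', hy'⟩ := Option.ne_none_iff_exists'.mp hne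
    rw [hy'] at hmap
    rcases h1 : g k z with _ | y1
    · rw [h1, Option.map₂_none_left] at hmap; exact absurd hmap (by simp)
    rcases h0 : g k z0 with _ | y0
    · rw [h0, Option.map₂_none_right] at hmap; exact absurd hmap (by simp)
    rw [h1, h0] at hmap
    have hy : y1 * y0 = y' := by simpa [Option.map₂_some_some] using hmap
    have hSet : {zc : G × Bool | zc.1 ∈ Z ∧ f k z0 zc = some y'} =
        {((z * z0 : G), false), ((z : G), true)} := by
      ext ⟨w, c⟩
      simp only [Set.mem_setOf_eq, Set.mem_insert_iff, Set.mem_singleton_iff,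
        Prod.mk.injEq]
      cases c
      · constructor
        · rintro ⟨hwZ, hw⟩
          rw [hf] at hw
          simp only [if_neg (by simp : ¬ (false : Bool) = true), Bool.false_eq_true,
            if_false] at hw
          exact Or.inl ⟨hg_inj k y' w hwZ (z * z0) hzz0 hw hy', rfl⟩
        · rintro (⟨rfl, -⟩ | ⟨-, h⟩)
          · exact ⟨hzz0, by rw [hf]; simpa using hy'⟩
          · simp at h
      · constructor
        · rintro ⟨hwZ, hw⟩
          rw [hf] at hw
          simp only [if_pos rfl, if_true] at hw
          rw [h0] at hw
          rcases hgw : g k w with _ | a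
          · rw [hgw, Option.map₂_none_left] at hw; exact absurd hw (by simp)
          · rw [hgw] at hw
            have ha : a * y0 = y' := by simpa [Option.map₂_some_some] using hw
            have ha1 : a = y1 := by
              have := ha.trans hy.symm
              exact mul_right_cancel this
            exact Or.inr ⟨hg_inj k y1 w hwZ z hzZ (ha1 ▸ hgw) h1, rfl⟩
        · rintro (⟨rfl, h⟩ | ⟨rfl, -⟩)
          · simp at h
          · refine ⟨hzZ, ?_⟩
            rw [hf]
            simp only [if_pos rfl, if_true, h1, h0, Option.map₂_some_some]
            exact congrArg some hy
    have hcard : {zc : G × Bool | zc.1 ∈ Z ∧ f k z0 zc = some y'}.ncard = 2 := by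
      rw [hSet]
      exact Set.ncard_pair (by simp)
    refine ⟨⟨y', ?_, hcard⟩, ⟨y', ?_, hcard⟩, hzz0⟩
    · rw [hf]
      simp only [if_pos rfl, if_true, h1, h0, Option.map₂_some_some]
      exact congrArg some hy
    · rw [hf]
      simpa using hy'
  -- rewrite both sides as tsums
  rw [PMF.toOuterMeasure_map_apply, PMF.toOuterMeasure_bind_apply,
    PMF.toOuterMeasure_apply]
  simp only [PMF.toOuterMeasure_map_apply]
  simp only [PMF.toOuterMeasure_apply]
  -- termwise descriptions
  have hLHS : ∀ z : G,
      (((fun z => (k, z0, z)) ⁻¹'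
        {x : K × G × G | x.2.2 * x.2.1 ∈ Z ∧
          Option.map₂ (· * ·) (g x.1 x.2.2) (g x.1 x.2.1) = g x.1 (x.2.2 * x.2.1) ∧
          g x.1 (x.2.2 * x.2.1) ≠ none}).indicator (⇑u) z)
      = (if z ∈ Z ∧ P z then (Z.card : ℝ≥0∞)⁻¹ else 0) := by
    intro z
    rw [Set.indicator_apply]
    have hmem : (z ∈ (fun z => (k, z0, z)) ⁻¹'
        {x : K × G × G | x.2.2 * x.2.1 ∈ Z ∧
          Option.map₂ (· * ·) (g x.1 x.2.2) (g x.1 x.2.1) = g x.1 (x.2.2 * x.2.1) ∧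
          g x.1 (x.2.2 * x.2.1) ≠ none}) ↔ P z := Iff.rfl
    by_cases hPz : P z
    · rw [if_pos (hmem.mpr hPz), hu, PMF.uniformOfFinset_apply]
      by_cases hzZ : z ∈ Z
      · rw [if_pos hzZ, if_pos ⟨hzZ, hPz⟩]
      · rw [if_neg hzZ, if_neg (fun h => hzZ h.1)]
    · rw [if_neg (fun h => hPz (hmem.mp h)), if_neg (fun h => hPz h.2)]
  have hRHS : ∀ z : G,
      (u z * ∑' (c : Bool),
        (((fun c => (k, z0, z, c)) ⁻¹'
          {x : K × G × G × Bool | ∃ y : Y,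
            f x.1 x.2.1 (x.2.2.1, x.2.2.2) = some y ∧
            {zc : G × Bool | zc.1 ∈ Z ∧ f x.1 x.2.1 zc = some y}.ncard = 2}).indicator
          (⇑(PMF.uniformOfFintype Bool)) c))
      = u z * ((if Q z false then 2⁻¹ else 0) + (if Q z true then 2⁻¹ else 0)) := by
    intro z
    congr 1
    rw [tsum_bool]
    congr 1 <;>
    · rw [Set.indicator_apply]
      split_ifs with h h' h'
      · rw [PMF.uniformOfFintype_apply]; simp [Fintype.card_bool]
      · exact absurd h h'
      · exact absurd h' h
      · rfl
  simp only [hLHS, hRHS]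
  -- the counting argument
  set L : G → ℝ≥0∞ := fun z => if z ∈ Z ∧ P z then (Z.card : ℝ≥0∞)⁻¹ else 0 with hL
  have huZ : ∀ z ∈ Z, u z = (Z.card : ℝ≥0∞)⁻¹ := by
    intro z hz; rw [hu, PMF.uniformOfFinset_apply, if_pos hz]
  have step1 : ∑' z : G, L z / 2 ≤ ∑' z : G, u z * (if Q z true then 2⁻¹ else 0) := by
    refine ENNReal.tsum_le_tsum fun z => ?_
    by_cases h : z ∈ Z ∧ P z
    · have hq := (key z h.1 h.2).1
      rw [hL]
      simp only [if_pos h, if_pos hq, huZ z h.1]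
      rw [div_eq_mul_inv]
    · rw [hL]; simp only [if_neg h, ENNReal.zero_div, zero_le]
  have step2 : ∑' z : G, L z / 2 ≤ ∑' z : G, u z * (if Q z false then 2⁻¹ else 0) := by
    have hre : ∑' z : G, L z / 2 = ∑' w : G, L (w * z0⁻¹) / 2 :=
      ((Equiv.mulRight z0⁻¹).tsum_eq (fun z => L z / 2)).symm
    rw [hre]
    refine ENNReal.tsum_le_tsum fun w => ?_
    by_cases h : w * z0⁻¹ ∈ Z ∧ P (w * z0⁻¹)
    · obtain ⟨-, hq, hwZ⟩ := key _ h.1 h.2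
      rw [inv_mul_cancel_right] at hq hwZ
      rw [hL]
      simp only [if_pos h, if_pos hq, huZ w hwZ]
      rw [div_eq_mul_inv]
    · rw [hL]; simp only [if_neg h, ENNReal.zero_div, zero_le]
  calc ∑' z : G, L z = ∑' z : G, (L z / 2 + L z / 2) := by
        simp [ENNReal.add_halves]
    _ = (∑' z : G, L z / 2) + ∑' z : G, L z / 2 := ENNReal.tsum_add
    _ ≤ (∑' z : G, u z * (if Q z false then 2⁻¹ else 0)) +
        ∑' z : G, u z * (if Q z true then 2⁻¹ else 0) := add_le_add step2 step1
    _ = ∑' z : G, (u z * (if Q z false then 2⁻¹ else 0) +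
        u z * (if Q z true then 2⁻¹ else 0)) := ENNReal.tsum_add.symm
    _ = ∑' z : G, u z * ((if Q z false then 2⁻¹ else 0) + (if Q z true then 2⁻¹ else 0)) := by
        simp [mul_add]
end

section
/- Let E be a complex inner product space and ψ₀, ψ₁ ∈ E orthonormal. Let ψ : {0,1,…,7} → E be unit vectors with ψ(0) = ψ₀ and ψ(4) = ψ₁, satisfying: (i) each ψ(L) lies in the span of {ψ₀, ψ₁}; (ii) |⟪ψ₀, ψ(L)⟫| = |cos(Lπ/8)| and |⟪ψ₁, ψ(L)⟫| = |sin(Lπ/8)| for every L; (iii) ⟪ψ(L + 4 mod 8), ψ(L)⟫ = 0 for every L; (iv) |⟪ψ(2), ψ(1)⟫| = cos(π/8) and |⟪ψ(2), ψ(3)⟫| = cos(π/8). Then there exists a real number φ such that for every L ∈ {0,…,7} there is a complex number c_L of modulus 1 with ψ(L) = c_L·( cos(Lπ/8)·ψ₀ + e^{iφ}·sin(Lπ/8)·ψ₁ ). (Exact version of the lemma determining the form of the eight self-tested states in i.i.d. blind self-testing.) -/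
open Complex Real

lemma lemA (x y : ℝ) (hx : 0 < x) (hy : 0 < y) (p q : ℂ)
    (hp : ‖p‖ = 1) (hq : ‖q‖ = 1)
    (h : ‖(x:ℂ)*p + (y:ℂ)*q‖ = x + y) : p = q := by
  have hp2 : p.re^2 + p.im^2 = 1 := by
    have := Complex.sq_norm p; rw [hp] at this
    simpa [Complex.normSq_apply, sq] using this.symm
  have hq2 : q.re^2 + q.im^2 = 1 := by
    have := Complex.sq_norm q; rw [hq] at this
    simpa [Complex.normSq_apply, sq] using this.symm
  have h2 : (x*p.re + y*q.re)^2 + (x*p.im + y*q.im)^2 = (x+y)^2 := by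
    have := Complex.sq_norm ((x:ℂ)*p + (y:ℂ)*q); rw [h] at this
    simpa [Complex.normSq_apply, Complex.add_re, Complex.add_im, Complex.mul_re,
      Complex.mul_im, Complex.ofReal_re, Complex.ofReal_im, sq] using this.symm
  have key : p.re*q.re + p.im*q.im = 1 := by
    have hxy : (2*(x*y)) ≠ 0 := by positivity
    have h4 : 2*(x*y)*(p.re*q.re + p.im*q.im) = 2*(x*y)*1 := by
      linear_combination h2 - x^2 * hp2 - y^2 * hq2
    exact mul_left_cancel₀ hxy h4
  have h3 : p.re = q.re ∧ p.im = q.im := by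
    constructor <;> nlinarith [sq_nonneg (p.re - q.re), sq_nonneg (p.im - q.im)]
  exact Complex.ext h3.1 h3.2

lemma mulconj (z : ℂ) (r : ℝ) (h : ‖z‖ = r) :
    z * (starRingEnd ℂ) z = ((r^2 : ℝ) : ℂ) := by
  rw [Complex.mul_conj, Complex.normSq_eq_norm_sq, h]

lemma polar (z : ℂ) (r : ℝ) (hr : 0 < r) (h : ‖z‖ = r) :
    ∃ u : ℂ, ‖u‖ = 1 ∧ z = u * (r:ℂ) := by
  refine ⟨z / (r:ℂ), ?_, ?_⟩
  · rw [norm_div, h, Complex.norm_real, Real.norm_eq_abs, abs_of_pos hr, div_self hr.ne']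
  · rw [div_mul_cancel₀]
    exact Complex.ofReal_ne_zero.mpr hr.ne'



/- STATEMENT 15: The eight self-tested states in i.i.d. blind self-testing have,
   up to a global phase, the form cos(Lπ/8)·ψ₀ + e^{iφ}·sin(Lπ/8)·ψ₁ for a common
   phase φ. -/

theorem eight_states_form
    {E : Type*} [NormedAddCommGroup E] [InnerProductSpace ℂ E]
    (ψ0 ψ1 : E)
    (h00 : (inner ℂ ψ0 ψ0 : ℂ) = 1) (h11 : (inner ℂ ψ1 ψ1 : ℂ) = 1)
    (h01 : (inner ℂ ψ0 ψ1 : ℂ) = 0)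
    (ψ : Fin 8 → E)
    (hunit : ∀ L, ‖ψ L‖ = 1)
    (hψ0 : ψ 0 = ψ0) (hψ4 : ψ 4 = ψ1)
    -- (i) each ψ(L) lies in the span of ψ₀ and ψ₁
    (hspan : ∀ L, ψ L ∈ Submodule.span ℂ ({ψ0, ψ1} : Set E))
    -- (ii) |⟪ψ₀, ψ(L)⟫| = |cos(Lπ/8)| and |⟪ψ₁, ψ(L)⟫| = |sin(Lπ/8)|
    (hcos : ∀ L : Fin 8,
      ‖(inner ℂ ψ0 (ψ L) : ℂ)‖ = |Real.cos ((L : ℕ) * Real.pi / 8)|)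
    (hsin : ∀ L : Fin 8,
      ‖(inner ℂ ψ1 (ψ L) : ℂ)‖ = |Real.sin ((L : ℕ) * Real.pi / 8)|)
    -- (iii) ⟪ψ(L+4 mod 8), ψ(L)⟫ = 0
    (horth : ∀ L : Fin 8, (inner ℂ (ψ (L + 4)) (ψ L) : ℂ) = 0)
    -- (iv) |⟪ψ(2), ψ(1)⟫| = cos(π/8) = |⟪ψ(2), ψ(3)⟫|
    (h21 : ‖(inner ℂ (ψ 2) (ψ 1) : ℂ)‖ = Real.cos (Real.pi / 8))
    (h23 : ‖(inner ℂ (ψ 2) (ψ 3) : ℂ)‖ = Real.cos (Real.pi / 8)) :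
    ∃ φ : ℝ, ∀ L : Fin 8, ∃ c : ℂ, ‖c‖ = 1 ∧
      ψ L = c • ((Real.cos ((L : ℕ) * Real.pi / 8) : ℂ) • ψ0 +
        (Complex.exp ((φ : ℂ) * Complex.I) * (Real.sin ((L : ℕ) * Real.pi / 8) : ℂ)) • ψ1) := by
  have h10 : (inner ℂ ψ1 ψ0 : ℂ) = 0 := by
    rw [← inner_conj_symm, h01, map_zero]
  set a : Fin 8 → ℂ := fun L => inner ℂ ψ0 (ψ L) with hadef
  set b : Fin 8 → ℂ := fun L => inner ℂ ψ1 (ψ L) with hbdef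
  have hab : ∀ L, ψ L = a L • ψ0 + b L • ψ1 := by
    intro L
    obtain ⟨c, d, h⟩ := Submodule.mem_span_pair.mp (hspan L)
    have ha : a L = c := by
      show (inner ℂ ψ0 (ψ L) : ℂ) = c
      rw [← h]
      simp [inner_add_right, inner_smul_right, h00, h01, -inner_self_eq_norm_sq_to_K]
    have hb : b L = d := by
      show (inner ℂ ψ1 (ψ L) : ℂ) = d
      rw [← h]
      simp [inner_add_right, inner_smul_right, h11, h10, -inner_self_eq_norm_sq_to_K]
    rw [ha, hb]; exact h.symm
  have hinner : ∀ K L : Fin 8, (inner ℂ (ψ K) (ψ L) : ℂ) =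
      (starRingEnd ℂ) (a K) * a L + (starRingEnd ℂ) (b K) * b L := by
    intro K L
    rw [hab K, hab L]
    simp [inner_add_left, inner_add_right, inner_smul_left, inner_smul_right,
      h00, h01, h10, h11, -inner_self_eq_norm_sq_to_K]
    ring
  -- trig facts
  have pi8 : (0:ℝ) < π/8 := by positivity
  have hc1 : 0 < Real.cos (π/8) := by
    apply Real.cos_pos_of_mem_Ioo; constructor <;> nlinarith [Real.pi_pos]
  have hs1 : 0 < Real.sin (π/8) := Real.sin_pos_of_pos_of_lt_pi pi8 (by nlinarith [Real.pi_pos])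
  have hc2 : 0 < Real.cos (2*π/8) := by
    apply Real.cos_pos_of_mem_Ioo; constructor <;> nlinarith [Real.pi_pos]
  have hs2 : 0 < Real.sin (2*π/8) := Real.sin_pos_of_pos_of_lt_pi (by positivity) (by nlinarith [Real.pi_pos])
  have hc3 : 0 < Real.cos (3*π/8) := by
    apply Real.cos_pos_of_mem_Ioo; constructor <;> nlinarith [Real.pi_pos]
  have hs3 : 0 < Real.sin (3*π/8) := Real.sin_pos_of_pos_of_lt_pi (by positivity) (by nlinarith [Real.pi_pos])
  have e4c : Real.cos (4*π/8) = 0 := by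
    rw [show (4:ℝ)*π/8 = π/2 by ring, Real.cos_pi_div_two]
  have e4s : Real.sin (4*π/8) = 1 := by
    rw [show (4:ℝ)*π/8 = π/2 by ring, Real.sin_pi_div_two]
  have e5c : Real.cos (5*π/8) = -Real.sin (π/8) := by
    rw [show (5:ℝ)*π/8 = π/2 + π/8 by ring, Real.cos_add, Real.cos_pi_div_two,
      Real.sin_pi_div_two]; ring
  have e5s : Real.sin (5*π/8) = Real.cos (π/8) := by
    rw [show (5:ℝ)*π/8 = π/2 + π/8 by ring, Real.sin_add, Real.cos_pi_div_two,
      Real.sin_pi_div_two]; ring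
  have e6c : Real.cos (6*π/8) = -Real.sin (2*π/8) := by
    rw [show (6:ℝ)*π/8 = π/2 + 2*π/8 by ring, Real.cos_add, Real.cos_pi_div_two,
      Real.sin_pi_div_two]; ring
  have e6s : Real.sin (6*π/8) = Real.cos (2*π/8) := by
    rw [show (6:ℝ)*π/8 = π/2 + 2*π/8 by ring, Real.sin_add, Real.cos_pi_div_two,
      Real.sin_pi_div_two]; ring
  have e7c : Real.cos (7*π/8) = -Real.sin (3*π/8) := by
    rw [show (7:ℝ)*π/8 = π/2 + 3*π/8 by ring, Real.cos_add, Real.cos_pi_div_two,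
      Real.sin_pi_div_two]; ring
  have e7s : Real.sin (7*π/8) = Real.cos (3*π/8) := by
    rw [show (7:ℝ)*π/8 = π/2 + 3*π/8 by ring, Real.sin_add, Real.cos_pi_div_two,
      Real.sin_pi_div_two]; ring
  have ecs1 : Real.cos (2*π/8) * Real.cos (π/8) + Real.sin (2*π/8) * Real.sin (π/8)
      = Real.cos (π/8) := by
    have := Real.cos_sub (2*π/8) (π/8)
    rw [show (2:ℝ)*π/8 - π/8 = π/8 by ring] at this
    linarith
  have ecs3 : Real.cos (2*π/8) * Real.cos (3*π/8) + Real.sin (2*π/8) * Real.sin (3*π/8)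
      = Real.cos (π/8) := by
    have := Real.cos_sub (3*π/8) (2*π/8)
    rw [show (3:ℝ)*π/8 - 2*π/8 = π/8 by ring] at this
    linarith
  -- abs values of coefficients
  have hA : ∀ L : Fin 8, ‖a L‖ = |Real.cos ((L : ℕ) * π / 8)| := hcos
  have hB : ∀ L : Fin 8, ‖b L‖ = |Real.sin ((L : ℕ) * π / 8)| := hsin
  have hA1 : ‖a 1‖ = Real.cos (π/8) := by
    have := hA 1
    rw [show (((1:Fin 8):ℕ):ℝ) = 1 from by norm_num [show ((1:Fin 8):ℕ) = 1 from rfl], show (1:ℝ) * π / 8 = π/8 by norm_num, abs_of_pos hc1] at this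
    exact this
  have hB1 : ‖b 1‖ = Real.sin (π/8) := by
    have := hB 1
    rw [show (((1:Fin 8):ℕ):ℝ) = 1 from by norm_num [show ((1:Fin 8):ℕ) = 1 from rfl], show (1:ℝ) * π / 8 = π/8 by norm_num, abs_of_pos hs1] at this
    exact this
  have hA2 : ‖a 2‖ = Real.cos (2*π/8) := by
    have := hA 2
    rw [show (((2:Fin 8):ℕ):ℝ) = 2 from by norm_num [show ((2:Fin 8):ℕ) = 2 from rfl], show (2:ℝ) * π / 8 = 2*π/8 by norm_num, abs_of_pos hc2] at this
    exact this
  have hB2 : ‖b 2‖ = Real.sin (2*π/8) := by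
    have := hB 2
    rw [show (((2:Fin 8):ℕ):ℝ) = 2 from by norm_num [show ((2:Fin 8):ℕ) = 2 from rfl], show (2:ℝ) * π / 8 = 2*π/8 by norm_num, abs_of_pos hs2] at this
    exact this
  have hA3 : ‖a 3‖ = Real.cos (3*π/8) := by
    have := hA 3
    rw [show (((3:Fin 8):ℕ):ℝ) = 3 from by norm_num [show ((3:Fin 8):ℕ) = 3 from rfl], show (3:ℝ) * π / 8 = 3*π/8 by norm_num, abs_of_pos hc3] at this
    exact this
  have hB3 : ‖b 3‖ = Real.sin (3*π/8) := by
    have := hB 3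
    rw [show (((3:Fin 8):ℕ):ℝ) = 3 from by norm_num [show ((3:Fin 8):ℕ) = 3 from rfl], show (3:ℝ) * π / 8 = 3*π/8 by norm_num, abs_of_pos hs3] at this
    exact this
  have hA5 : ‖a 5‖ = Real.sin (π/8) := by
    have := hA 5
    rw [show (((5:Fin 8):ℕ):ℝ) = 5 from by norm_num [show ((5:Fin 8):ℕ) = 5 from rfl], show (5:ℝ) * π / 8 = 5*π/8 by norm_num, e5c, abs_neg,
      abs_of_pos hs1] at this
    exact this
  have hB5 : ‖b 5‖ = Real.cos (π/8) := by
    have := hB 5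
    rw [show (((5:Fin 8):ℕ):ℝ) = 5 from by norm_num [show ((5:Fin 8):ℕ) = 5 from rfl], show (5:ℝ) * π / 8 = 5*π/8 by norm_num, e5s, abs_of_pos hc1] at this
    exact this
  have hA6 : ‖a 6‖ = Real.sin (2*π/8) := by
    have := hA 6
    rw [show (((6:Fin 8):ℕ):ℝ) = 6 from by norm_num [show ((6:Fin 8):ℕ) = 6 from rfl], show (6:ℝ) * π / 8 = 6*π/8 by norm_num, e6c, abs_neg,
      abs_of_pos hs2] at this
    exact this
  have hB6 : ‖b 6‖ = Real.cos (2*π/8) := by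
    have := hB 6
    rw [show (((6:Fin 8):ℕ):ℝ) = 6 from by norm_num [show ((6:Fin 8):ℕ) = 6 from rfl], show (6:ℝ) * π / 8 = 6*π/8 by norm_num, e6s, abs_of_pos hc2] at this
    exact this
  have hA7 : ‖a 7‖ = Real.sin (3*π/8) := by
    have := hA 7
    rw [show (((7:Fin 8):ℕ):ℝ) = 7 from by norm_num [show ((7:Fin 8):ℕ) = 7 from rfl], show (7:ℝ) * π / 8 = 7*π/8 by norm_num, e7c, abs_neg,
      abs_of_pos hs3] at this
    exact this
  have hB7 : ‖b 7‖ = Real.cos (3*π/8) := by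
    have := hB 7
    rw [show (((7:Fin 8):ℕ):ℝ) = 7 from by norm_num [show ((7:Fin 8):ℕ) = 7 from rfl], show (7:ℝ) * π / 8 = 7*π/8 by norm_num, e7s, abs_of_pos hc3] at this
    exact this
  obtain ⟨u1, au1, eu1⟩ := polar (a 1) _ hc1 hA1
  have eu1u : u1 * (starRingEnd ℂ) u1 = 1 := by
    have := mulconj u1 1 au1; simpa using this
  obtain ⟨v1, av1, ev1⟩ := polar (b 1) _ hs1 hB1
  have fv1v : v1 * (starRingEnd ℂ) v1 = 1 := by
    have := mulconj v1 1 av1; simpa using this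
  obtain ⟨u2, au2, eu2⟩ := polar (a 2) _ hc2 hA2
  have eu2u : u2 * (starRingEnd ℂ) u2 = 1 := by
    have := mulconj u2 1 au2; simpa using this
  obtain ⟨v2, av2, ev2⟩ := polar (b 2) _ hs2 hB2
  have fv2v : v2 * (starRingEnd ℂ) v2 = 1 := by
    have := mulconj v2 1 av2; simpa using this
  obtain ⟨u3, au3, eu3⟩ := polar (a 3) _ hc3 hA3
  have eu3u : u3 * (starRingEnd ℂ) u3 = 1 := by
    have := mulconj u3 1 au3; simpa using this
  obtain ⟨v3, av3, ev3⟩ := polar (b 3) _ hs3 hB3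
  have fv3v : v3 * (starRingEnd ℂ) v3 = 1 := by
    have := mulconj v3 1 av3; simpa using this
  obtain ⟨u5, au5, eu5⟩ := polar (a 5) _ hs1 hA5
  have eu5u : u5 * (starRingEnd ℂ) u5 = 1 := by
    have := mulconj u5 1 au5; simpa using this
  obtain ⟨v5, av5, ev5⟩ := polar (b 5) _ hc1 hB5
  have fv5v : v5 * (starRingEnd ℂ) v5 = 1 := by
    have := mulconj v5 1 av5; simpa using this
  obtain ⟨u6, au6, eu6⟩ := polar (a 6) _ hs2 hA6
  have eu6u : u6 * (starRingEnd ℂ) u6 = 1 := by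
    have := mulconj u6 1 au6; simpa using this
  obtain ⟨v6, av6, ev6⟩ := polar (b 6) _ hc2 hB6
  have fv6v : v6 * (starRingEnd ℂ) v6 = 1 := by
    have := mulconj v6 1 av6; simpa using this
  obtain ⟨u7, au7, eu7⟩ := polar (a 7) _ hs3 hA7
  have eu7u : u7 * (starRingEnd ℂ) u7 = 1 := by
    have := mulconj u7 1 au7; simpa using this
  obtain ⟨v7, av7, ev7⟩ := polar (b 7) _ hc3 hB7
  have fv7v : v7 * (starRingEnd ℂ) v7 = 1 := by
    have := mulconj v7 1 av7; simpa using this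
  set w := v1 * (starRingEnd ℂ) u1 with hwdef
  have habsw : ‖w‖ = 1 := by
    rw [hwdef, norm_mul, Complex.norm_conj, av1, au1, one_mul]
  have r1 : (starRingEnd ℂ) u2 * u1 = (starRingEnd ℂ) v2 * v1 := by
    have hp : ‖(starRingEnd ℂ) u2 * u1‖ = 1 := by
      rw [norm_mul, Complex.norm_conj, au2, au1, one_mul]
    have hq : ‖(starRingEnd ℂ) v2 * v1‖ = 1 := by
      rw [norm_mul, Complex.norm_conj, av2, av1, one_mul]
    apply lemA _ _ (mul_pos hc2 hc1) (mul_pos hs2 hs1) _ _ hp hq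
    have key : ((Real.cos (2*π/8) * Real.cos (π/8) : ℝ):ℂ) * ((starRingEnd ℂ) u2 * u1)
        + ((Real.sin (2*π/8) * Real.sin (π/8) : ℝ):ℂ) * ((starRingEnd ℂ) v2 * v1)
        = (inner ℂ (ψ 2) (ψ 1) : ℂ) := by
      rw [hinner 2 1, eu1, ev1, eu2, ev2]
      simp only [map_mul, Complex.conj_ofReal]
      push_cast
      ring
    rw [key, h21, ecs1]
  have r3 : (starRingEnd ℂ) u2 * u3 = (starRingEnd ℂ) v2 * v3 := by
    have hp : ‖(starRingEnd ℂ) u2 * u3‖ = 1 := by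
      rw [norm_mul, Complex.norm_conj, au2, au3, one_mul]
    have hq : ‖(starRingEnd ℂ) v2 * v3‖ = 1 := by
      rw [norm_mul, Complex.norm_conj, av2, av3, one_mul]
    apply lemA _ _ (mul_pos hc2 hc3) (mul_pos hs2 hs3) _ _ hp hq
    have key : ((Real.cos (2*π/8) * Real.cos (3*π/8) : ℝ):ℂ) * ((starRingEnd ℂ) u2 * u3)
        + ((Real.sin (2*π/8) * Real.sin (3*π/8) : ℝ):ℂ) * ((starRingEnd ℂ) v2 * v3)
        = (inner ℂ (ψ 2) (ψ 3) : ℂ) := by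
      rw [hinner 2 3, eu3, ev3, eu2, ev2]
      simp only [map_mul, Complex.conj_ofReal]
      push_cast
      ring
    rw [key, h23, ecs3]
  have s5 : (starRingEnd ℂ) u5 * u1 + (starRingEnd ℂ) v5 * v1 = 0 := by
    have h5 := horth 1
    rw [show (1:Fin 8)+4 = 5 from rfl, hinner 5 1, eu1, ev1, eu5, ev5] at h5
    simp only [map_mul, Complex.conj_ofReal] at h5
    apply mul_left_cancel₀ (mul_ne_zero (Complex.ofReal_ne_zero.mpr hs1.ne')
      (Complex.ofReal_ne_zero.mpr hc1.ne'))
    rw [mul_zero]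
    linear_combination h5
  have s6 : (starRingEnd ℂ) u6 * u2 + (starRingEnd ℂ) v6 * v2 = 0 := by
    have h6 := horth 2
    rw [show (2:Fin 8)+4 = 6 from rfl, hinner 6 2, eu2, ev2, eu6, ev6] at h6
    simp only [map_mul, Complex.conj_ofReal] at h6
    apply mul_left_cancel₀ (mul_ne_zero (Complex.ofReal_ne_zero.mpr hs2.ne')
      (Complex.ofReal_ne_zero.mpr hc2.ne'))
    rw [mul_zero]
    linear_combination h6
  have s7 : (starRingEnd ℂ) u7 * u3 + (starRingEnd ℂ) v7 * v3 = 0 := by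
    have h7 := horth 3
    rw [show (3:Fin 8)+4 = 7 from rfl, hinner 7 3, eu3, ev3, eu7, ev7] at h7
    simp only [map_mul, Complex.conj_ofReal] at h7
    apply mul_left_cancel₀ (mul_ne_zero (Complex.ofReal_ne_zero.mpr hs3.ne')
      (Complex.ofReal_ne_zero.mpr hc3.ne'))
    rw [mul_zero]
    linear_combination h7
  have tv2' : v2 * u1 = u2 * v1 := by
    linear_combination u2*v2*r1 - u1*v2*eu2u + u2*v1*fv2v
  have tv2 : v2 = u2 * w := by
    linear_combination (starRingEnd ℂ) u1 * tv2' - v2 * eu1u - u2 * hwdef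
  have tv3' : v3 * u1 = u3 * v1 := by
    linear_combination u2*v3*r1 - u2*v1*r3 - (u1*v3 - u3*v1)*eu2u
  have tv3 : v3 = u3 * w := by
    linear_combination (starRingEnd ℂ) u1 * tv3' - v3 * eu1u - u3 * hwdef
  have tv5' : v5 * u1 = -(u5 * v1) := by
    linear_combination u5*v5*s5 - u1*v5*eu5u - u5*v1*fv5v
  have tv5 : v5 = -(u5 * w) := by
    linear_combination (starRingEnd ℂ) u1 * tv5' - v5 * eu1u + u5 * hwdef
  have tv6' : v6 * u2 = -(u6 * v2) := by
    linear_combination u6*v6*s6 - u2*v6*eu6u - u6*v2*fv6v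
  have tv6'' : v6 * u1 = -(u6 * v1) := by
    linear_combination ((starRingEnd ℂ) u2*u1)*tv6' - ((starRingEnd ℂ) u2*u6)*tv2'
      - (v6*u1 + u6*v1)*eu2u
  have tv6 : v6 = -(u6 * w) := by
    linear_combination (starRingEnd ℂ) u1 * tv6'' - v6 * eu1u + u6 * hwdef
  have tv7' : v7 * u3 = -(u7 * v3) := by
    linear_combination u7*v7*s7 - u3*v7*eu7u - u7*v3*fv7v
  have tv7'' : v7 * u1 = -(u7 * v1) := by
    linear_combination ((starRingEnd ℂ) u3*u1)*tv7' - ((starRingEnd ℂ) u3*u7)*tv3'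
      - (v7*u1 + u7*v1)*eu3u
  have tv7 : v7 = -(u7 * w) := by
    linear_combination (starRingEnd ℂ) u1 * tv7'' - v7 * eu1u + u7 * hwdef
  have vec : ∀ (A B C D : ℂ), A = C → B = D →
      A • ψ0 + B • ψ1 = C • ψ0 + D • ψ1 := by
    intro A B C D h1 h2; rw [h1, h2]
  have K0 : ∃ c : ℂ, ‖c‖ = 1 ∧ ψ 0 = c •
      ((Real.cos ((((0:Fin 8):ℕ):ℝ) * Real.pi / 8) : ℂ) • ψ0 +
        (w * (Real.sin ((((0:Fin 8):ℕ):ℝ) * Real.pi / 8) : ℂ)) • ψ1) := by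
    rw [show ((((0:Fin 8):ℕ)):ℝ) = 0 from by norm_num [show ((0:Fin 8):ℕ) = 0 from rfl]]
    refine ⟨1, by simp, ?_⟩
    rw [hψ0, show (0:ℝ)*Real.pi/8 = 0 by ring]
    simp
  have K4 : ∃ c : ℂ, ‖c‖ = 1 ∧ ψ 4 = c •
      ((Real.cos ((((4:Fin 8):ℕ):ℝ) * Real.pi / 8) : ℂ) • ψ0 +
        (w * (Real.sin ((((4:Fin 8):ℕ):ℝ) * Real.pi / 8) : ℂ)) • ψ1) := by
    rw [show ((((4:Fin 8):ℕ)):ℝ) = 4 from by norm_num [show ((4:Fin 8):ℕ) = 4 from rfl]]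
    refine ⟨(starRingEnd ℂ) w, by rw [Complex.norm_conj, habsw], ?_⟩
    rw [hψ4, e4c, e4s]
    have hcw : (starRingEnd ℂ) w * w = 1 := by
      have := mulconj w 1 habsw
      simpa [mul_comm] using this
    push_cast
    simp only [zero_smul, mul_one, zero_add, smul_smul, hcw, one_smul]
  have K1 : ∃ c : ℂ, ‖c‖ = 1 ∧ ψ 1 = c •
      ((Real.cos ((((1:Fin 8):ℕ):ℝ) * Real.pi / 8) : ℂ) • ψ0 +
        (w * (Real.sin ((((1:Fin 8):ℕ):ℝ) * Real.pi / 8) : ℂ)) • ψ1) := by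
    rw [show ((((1:Fin 8):ℕ)):ℝ) = 1 from by norm_num [show ((1:Fin 8):ℕ) = 1 from rfl]]
    rw [show (1:ℝ)*Real.pi/8 = π/8 by ring]
    refine ⟨u1, au1, ?_⟩
    rw [hab 1, smul_add, smul_smul, smul_smul]
    refine vec _ _ _ _ ?_ ?_
    · rw [eu1]
    · rw [ev1]
      linear_combination (-((Real.sin (π/8) : ℂ) * v1)) * eu1u - ((Real.sin (π/8) : ℂ) * u1) * hwdef
  have K2 : ∃ c : ℂ, ‖c‖ = 1 ∧ ψ 2 = c •
      ((Real.cos ((((2:Fin 8):ℕ):ℝ) * Real.pi / 8) : ℂ) • ψ0 +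
        (w * (Real.sin ((((2:Fin 8):ℕ):ℝ) * Real.pi / 8) : ℂ)) • ψ1) := by
    rw [show ((((2:Fin 8):ℕ)):ℝ) = 2 from by norm_num [show ((2:Fin 8):ℕ) = 2 from rfl]]
    refine ⟨u2, au2, ?_⟩
    rw [hab 2, smul_add, smul_smul, smul_smul]
    refine vec _ _ _ _ ?_ ?_
    · rw [eu2]
    · rw [ev2]
      linear_combination (Real.sin (2*π/8) : ℂ) * tv2
  have K3 : ∃ c : ℂ, ‖c‖ = 1 ∧ ψ 3 = c •
      ((Real.cos ((((3:Fin 8):ℕ):ℝ) * Real.pi / 8) : ℂ) • ψ0 +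
        (w * (Real.sin ((((3:Fin 8):ℕ):ℝ) * Real.pi / 8) : ℂ)) • ψ1) := by
    rw [show ((((3:Fin 8):ℕ)):ℝ) = 3 from by norm_num [show ((3:Fin 8):ℕ) = 3 from rfl]]
    refine ⟨u3, au3, ?_⟩
    rw [hab 3, smul_add, smul_smul, smul_smul]
    refine vec _ _ _ _ ?_ ?_
    · rw [eu3]
    · rw [ev3]
      linear_combination (Real.sin (3*π/8) : ℂ) * tv3
  have K5 : ∃ c : ℂ, ‖c‖ = 1 ∧ ψ 5 = c •
      ((Real.cos ((((5:Fin 8):ℕ):ℝ) * Real.pi / 8) : ℂ) • ψ0 +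
        (w * (Real.sin ((((5:Fin 8):ℕ):ℝ) * Real.pi / 8) : ℂ)) • ψ1) := by
    rw [show ((((5:Fin 8):ℕ)):ℝ) = 5 from by norm_num [show ((5:Fin 8):ℕ) = 5 from rfl]]
    refine ⟨-u5, by simpa using au5, ?_⟩
    rw [hab 5, smul_add, smul_smul, smul_smul, e5c, e5s]
    refine vec _ _ _ _ ?_ ?_
    · rw [eu5]
      push_cast
      ring
    · rw [ev5]
      linear_combination (Real.cos (π/8) : ℂ) * tv5
  have K6 : ∃ c : ℂ, ‖c‖ = 1 ∧ ψ 6 = c •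
      ((Real.cos ((((6:Fin 8):ℕ):ℝ) * Real.pi / 8) : ℂ) • ψ0 +
        (w * (Real.sin ((((6:Fin 8):ℕ):ℝ) * Real.pi / 8) : ℂ)) • ψ1) := by
    rw [show ((((6:Fin 8):ℕ)):ℝ) = 6 from by norm_num [show ((6:Fin 8):ℕ) = 6 from rfl]]
    refine ⟨-u6, by simpa using au6, ?_⟩
    rw [hab 6, smul_add, smul_smul, smul_smul, e6c, e6s]
    refine vec _ _ _ _ ?_ ?_
    · rw [eu6]
      push_cast
      ring
    · rw [ev6]
      linear_combination (Real.cos (2*π/8) : ℂ) * tv6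
  have K7 : ∃ c : ℂ, ‖c‖ = 1 ∧ ψ 7 = c •
      ((Real.cos ((((7:Fin 8):ℕ):ℝ) * Real.pi / 8) : ℂ) • ψ0 +
        (w * (Real.sin ((((7:Fin 8):ℕ):ℝ) * Real.pi / 8) : ℂ)) • ψ1) := by
    rw [show ((((7:Fin 8):ℕ)):ℝ) = 7 from by norm_num [show ((7:Fin 8):ℕ) = 7 from rfl]]
    refine ⟨-u7, by simpa using au7, ?_⟩
    rw [hab 7, smul_add, smul_smul, smul_smul, e7c, e7s]
    refine vec _ _ _ _ ?_ ?_
    · rw [eu7]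
      push_cast
      ring
    · rw [ev7]
      linear_combination (Real.cos (3*π/8) : ℂ) * tv7
  refine ⟨w.arg, ?_⟩
  have hexp : Complex.exp ((w.arg : ℂ) * Complex.I) = w := by
    have h := Complex.norm_mul_exp_arg_mul_I w
    rwa [habsw, Complex.ofReal_one, one_mul] at h
  intro L
  rw [hexp]
  fin_cases L
  · exact K0
  · exact K1
  · exact K2
  · exact K3
  · exact K4
  · exact K5
  · exact K6
  · exact K7
end
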